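/- Let W be a discrete memoryless channel with binary uniform input X and output Y, and define W⁻ and W⁺ by W⁻(y₁,y₂|x₁) = (1/2) ∑_{x₂} W(y₁|x₁⊕x₂) W(y₂|x₂) and W⁺(y₁,y₂,x₁|x₂) = (1/2) W(y₁|x₁⊕x₂) W(y₂|x₂). Then I(W⁻) + I(W⁺) = 2 I(W), where I denotes the mutual information between a uniform input and the channel output. -/
import Mathlib


open scoped BigOperators

/-- Mutual information of a binary-input discrete channel `W : Bool → Y → ℝ`
with uniformly distributed input. -/
noncomputable def mutualInfo {Y : Type*} [Fintype Y] (W : Bool → Y → ℝ) : ℝ :=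
  ∑ x : Bool, ∑ y : Y,
    (1/2) * W x y * Real.logb 2 (W x y / ((W false y + W true y) / 2))

/-- The minus (worse) polar transform of `W`. -/
noncomputable def polarMinus {Y : Type*} (W : Bool → Y → ℝ) :
    Bool → Y × Y → ℝ :=
  fun x₁ y => (1/2) * ∑ x₂ : Bool, W (xor x₁ x₂) y.1 * W x₂ y.2

/-- The plus (better) polar transform of `W`. -/
noncomputable def polarPlus {Y : Type*} (W : Bool → Y → ℝ) :
    Bool → Y × Y × Bool → ℝ :=
  fun x₂ y => (1/2) * W (xor y.2.2 x₂) y.1 * W x₂ y.2.1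

private lemma key_log (a b sa sb m : ℝ) (ha : 0 ≤ a) (hb : 0 ≤ b) (hsa : a ≤ sa) (hsb : b ≤ sb)
    (hm : 1/2 * (a*b) ≤ m) :
    1/4*(a*b) * Real.logb 2 (m / (1/4*(sa*sb)))
      + 1/4*(a*b) * Real.logb 2 ((1/2*(a*b)) / (m/2))
    = 1/4*(a*b) * Real.logb 2 (a / (sa/2))
      + 1/4*(a*b) * Real.logb 2 (b / (sb/2)) := by
  rcases eq_or_lt_of_le ha with h|h
  · simp [← h]
  rcases eq_or_lt_of_le hb with h'|h'
  · simp [← h']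
  have hsa' : 0 < sa := lt_of_lt_of_le h hsa
  have hsb' : 0 < sb := lt_of_lt_of_le h' hsb
  have hm' : 0 < m := lt_of_lt_of_le (by positivity) hm
  have h2 : (0:ℝ) < 2 := by norm_num
  rw [Real.logb_div hm'.ne' (by positivity),
      Real.logb_div (by positivity) (by positivity : (0:ℝ) < m/2).ne',
      Real.logb_div h.ne' (by positivity : (0:ℝ) < sa/2).ne',
      Real.logb_div h'.ne' (by positivity : (0:ℝ) < sb/2).ne',
      show (1/4:ℝ)*(sa*sb) = sa*sb/(2*2) by ring,
      show (1/2:ℝ)*(a*b) = a*b/2 by ring,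
      Real.logb_div (by positivity) (by norm_num : ((2:ℝ)*2) ≠ 0),
      Real.logb_div (by positivity) h2.ne',
      Real.logb_div hm'.ne' h2.ne',
      Real.logb_div hsa'.ne' h2.ne',
      Real.logb_div hsb'.ne' h2.ne',
      Real.logb_mul hsa'.ne' hsb'.ne',
      Real.logb_mul h.ne' h'.ne',
      Real.logb_mul h2.ne' h2.ne']
  have h22 : Real.logb 2 2 = 1 := by simp
  rw [h22]; ring

private lemma sum_xor_bool (g : Bool → ℝ) (u₂ : Bool) :
    ∑ u₁ : Bool, g (xor u₁ u₂) = ∑ x : Bool, g x := by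
  cases u₂ <;> simp [Fintype.sum_bool, add_comm]

private lemma reorder_sums {Y : Type*} [Fintype Y] (f : Bool → Bool → Y → Y → ℝ) :
    (∑ u₁ : Bool, ∑ y₁ : Y, ∑ y₂ : Y, ∑ u₂ : Bool, f u₁ u₂ y₁ y₂)
      = ∑ u₁ : Bool, ∑ u₂ : Bool, ∑ y₁ : Y, ∑ y₂ : Y, f u₁ u₂ y₁ y₂ := by
  refine Finset.sum_congr rfl fun u₁ _ => ?_
  calc (∑ y₁ : Y, ∑ y₂ : Y, ∑ u₂ : Bool, f u₁ u₂ y₁ y₂)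
      = ∑ y₁ : Y, ∑ u₂ : Bool, ∑ y₂ : Y, f u₁ u₂ y₁ y₂ :=
        Finset.sum_congr rfl fun y₁ _ => Finset.sum_comm
    _ = ∑ u₂ : Bool, ∑ y₁ : Y, ∑ y₂ : Y, f u₁ u₂ y₁ y₂ := Finset.sum_comm

private lemma reorder_sums2 {Y : Type*} [Fintype Y] (f : Bool → Bool → Y → Y → ℝ) :
    (∑ u₂ : Bool, ∑ y₁ : Y, ∑ y₂ : Y, ∑ u₁ : Bool, f u₁ u₂ y₁ y₂)
      = ∑ u₁ : Bool, ∑ u₂ : Bool, ∑ y₁ : Y, ∑ y₂ : Y, f u₁ u₂ y₁ y₂ := by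
  calc (∑ u₂ : Bool, ∑ y₁ : Y, ∑ y₂ : Y, ∑ u₁ : Bool, f u₁ u₂ y₁ y₂)
      = ∑ u₂ : Bool, ∑ u₁ : Bool, ∑ y₁ : Y, ∑ y₂ : Y, f u₁ u₂ y₁ y₂ := by
        refine Finset.sum_congr rfl fun u₂ _ => ?_
        calc (∑ y₁ : Y, ∑ y₂ : Y, ∑ u₁ : Bool, f u₁ u₂ y₁ y₂)
            = ∑ y₁ : Y, ∑ u₁ : Bool, ∑ y₂ : Y, f u₁ u₂ y₁ y₂ :=
              Finset.sum_congr rfl fun y₁ _ => Finset.sum_comm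
          _ = ∑ u₁ : Bool, ∑ y₁ : Y, ∑ y₂ : Y, f u₁ u₂ y₁ y₂ := Finset.sum_comm
    _ = ∑ u₁ : Bool, ∑ u₂ : Bool, ∑ y₁ : Y, ∑ y₂ : Y, f u₁ u₂ y₁ y₂ := Finset.sum_comm

theorem polar_chain_rule {Y : Type*} [Fintype Y] (W : Bool → Y → ℝ)
    (hW : ∀ x y, 0 ≤ W x y) (hWs : ∀ x, ∑ y, W x y = 1) :
    mutualInfo (polarMinus W) + mutualInfo (polarPlus W) = 2 * mutualInfo W := by
  classical
  -- denominator identities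
  have hden1 : ∀ y₁ y₂ : Y, (polarMinus W false (y₁,y₂) + polarMinus W true (y₁,y₂)) / 2
      = 1/4*((W false y₁ + W true y₁)*(W false y₂ + W true y₂)) := by
    intro y₁ y₂; simp only [polarMinus, Fintype.sum_bool, Bool.xor_false, Bool.xor_true, Bool.false_xor, Bool.true_xor, Bool.not_true, Bool.not_false]; ring
  have hmm : ∀ (u₁ : Bool) (y₁ y₂ : Y), (1/2) * polarMinus W u₁ (y₁,y₂)
      = ∑ u₂ : Bool, 1/4*(W (xor u₁ u₂) y₁ * W u₂ y₂) := by
    intro u₁ y₁ y₂; simp only [polarMinus, Fintype.sum_bool, Bool.xor_false, Bool.xor_true, Bool.false_xor, Bool.true_xor, Bool.not_true, Bool.not_false]; ring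
  have hden2 : ∀ (u₁ : Bool) (y₁ y₂ : Y),
      (polarPlus W false (y₁,y₂,u₁) + polarPlus W true (y₁,y₂,u₁)) / 2
        = polarMinus W u₁ (y₁,y₂) / 2 := by
    intro u₁ y₁ y₂; simp only [polarPlus, polarMinus, Fintype.sum_bool, Bool.xor_false, Bool.xor_true, Bool.false_xor, Bool.true_xor, Bool.not_true, Bool.not_false]; ring
  have hval2 : ∀ (u₁ u₂ : Bool) (y₁ y₂ : Y),
      polarPlus W u₂ (y₁,y₂,u₁) = 1/2*(W (xor u₁ u₂) y₁ * W u₂ y₂) := by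
    intro u₁ u₂ y₁ y₂; simp only [polarPlus]; ring
  -- step 1 : minus channel as a quadruple sum
  have hminus : mutualInfo (polarMinus W)
      = ∑ u₁ : Bool, ∑ u₂ : Bool, ∑ y₁ : Y, ∑ y₂ : Y,
          1/4*(W (xor u₁ u₂) y₁ * W u₂ y₂) *
            Real.logb 2 (polarMinus W u₁ (y₁,y₂) /
              (1/4*((W false y₁ + W true y₁)*(W false y₂ + W true y₂)))) := by
    rw [← reorder_sums]
    simp only [mutualInfo, Fintype.sum_prod_type]
    refine Finset.sum_congr rfl fun u₁ _ => Finset.sum_congr rfl fun y₁ _ =>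
      Finset.sum_congr rfl fun y₂ _ => ?_
    rw [hden1 y₁ y₂, ← Finset.sum_mul, ← hmm u₁ y₁ y₂]
  -- step 2 : plus channel as a quadruple sum
  have hplus : mutualInfo (polarPlus W)
      = ∑ u₁ : Bool, ∑ u₂ : Bool, ∑ y₁ : Y, ∑ y₂ : Y,
          1/4*(W (xor u₁ u₂) y₁ * W u₂ y₂) *
            Real.logb 2 ((1/2*(W (xor u₁ u₂) y₁ * W u₂ y₂)) /
              (polarMinus W u₁ (y₁,y₂) / 2)) := by
    simp only [mutualInfo, Fintype.sum_prod_type]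
    rw [← reorder_sums2 (fun u₁ u₂ y₁ y₂ =>
      1/4*(W (xor u₁ u₂) y₁ * W u₂ y₂) *
        Real.logb 2 ((1/2*(W (xor u₁ u₂) y₁ * W u₂ y₂)) / (polarMinus W u₁ (y₁,y₂) / 2)))]
    refine Finset.sum_congr rfl fun u₂ _ => Finset.sum_congr rfl fun y₁ _ =>
      Finset.sum_congr rfl fun y₂ _ => Finset.sum_congr rfl fun u₁ _ => ?_
    rw [hden2 u₁ y₁ y₂, hval2 u₁ u₂ y₁ y₂]
    ring
  -- step 3 : combine pointwise via the key log identity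
  have step : mutualInfo (polarMinus W) + mutualInfo (polarPlus W)
      = (∑ u₁ : Bool, ∑ u₂ : Bool, ∑ y₁ : Y, ∑ y₂ : Y,
          1/4*(W (xor u₁ u₂) y₁ * W u₂ y₂) *
            Real.logb 2 (W (xor u₁ u₂) y₁ / ((W false y₁ + W true y₁)/2)))
        + (∑ u₁ : Bool, ∑ u₂ : Bool, ∑ y₁ : Y, ∑ y₂ : Y,
          1/4*(W (xor u₁ u₂) y₁ * W u₂ y₂) *
            Real.logb 2 (W u₂ y₂ / ((W false y₂ + W true y₂)/2))) := by
    rw [hminus, hplus]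
    simp only [← Finset.sum_add_distrib]
    refine Finset.sum_congr rfl fun u₁ _ => Finset.sum_congr rfl fun u₂ _ =>
      Finset.sum_congr rfl fun y₁ _ => Finset.sum_congr rfl fun y₂ _ => ?_
    have hsa : W (xor u₁ u₂) y₁ ≤ W false y₁ + W true y₁ := by
      cases hx : xor u₁ u₂ <;> linarith [hW true y₁, hW false y₁]
    have hsb : W u₂ y₂ ≤ W false y₂ + W true y₂ := by
      cases u₂ <;> linarith [hW true y₂, hW false y₂]
    have hWm : polarMinus W u₁ (y₁,y₂)
        = 1/2*(W (xor u₁ false) y₁ * W false y₂ + W (xor u₁ true) y₁ * W true y₂) := by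
      simp only [polarMinus, Fintype.sum_bool]; ring
    have hm : 1/2 * (W (xor u₁ u₂) y₁ * W u₂ y₂) ≤ polarMinus W u₁ (y₁,y₂) := by
      cases u₂ <;> rw [hWm] <;>
        nlinarith [mul_nonneg (hW (xor u₁ true) y₁) (hW true y₂),
          mul_nonneg (hW (xor u₁ false) y₁) (hW false y₂)]
    exact key_log (W (xor u₁ u₂) y₁) (W u₂ y₂) (W false y₁ + W true y₁)
      (W false y₂ + W true y₂) (polarMinus W u₁ (y₁,y₂)) (hW _ _) (hW _ _) hsa hsb hm
  -- step 4 : each of the two sums equals mutualInfo W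
  have hS1 : (∑ u₁ : Bool, ∑ u₂ : Bool, ∑ y₁ : Y, ∑ y₂ : Y,
      1/4*(W (xor u₁ u₂) y₁ * W u₂ y₂) *
        Real.logb 2 (W (xor u₁ u₂) y₁ / ((W false y₁ + W true y₁)/2)))
      = mutualInfo W := by
    have h1 : ∀ (u₁ u₂ : Bool) (y₁ : Y),
        (∑ y₂ : Y, 1/4*(W (xor u₁ u₂) y₁ * W u₂ y₂) *
          Real.logb 2 (W (xor u₁ u₂) y₁ / ((W false y₁ + W true y₁)/2)))
        = 1/4 * W (xor u₁ u₂) y₁ *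
            Real.logb 2 (W (xor u₁ u₂) y₁ / ((W false y₁ + W true y₁)/2)) := by
      intro u₁ u₂ y₁
      calc (∑ y₂ : Y, 1/4*(W (xor u₁ u₂) y₁ * W u₂ y₂) *
              Real.logb 2 (W (xor u₁ u₂) y₁ / ((W false y₁ + W true y₁)/2)))
          = ∑ y₂ : Y, (1/4 * W (xor u₁ u₂) y₁ *
              Real.logb 2 (W (xor u₁ u₂) y₁ / ((W false y₁ + W true y₁)/2))) * W u₂ y₂ :=
            Finset.sum_congr rfl fun _ _ => by ring
        _ = (1/4 * W (xor u₁ u₂) y₁ *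
              Real.logb 2 (W (xor u₁ u₂) y₁ / ((W false y₁ + W true y₁)/2))) *
              ∑ y₂ : Y, W u₂ y₂ := by rw [Finset.mul_sum]
        _ = _ := by rw [hWs u₂, mul_one]
    calc (∑ u₁ : Bool, ∑ u₂ : Bool, ∑ y₁ : Y, ∑ y₂ : Y,
        1/4*(W (xor u₁ u₂) y₁ * W u₂ y₂) *
          Real.logb 2 (W (xor u₁ u₂) y₁ / ((W false y₁ + W true y₁)/2)))
        = ∑ u₁ : Bool, ∑ u₂ : Bool, ∑ y₁ : Y, 1/4 * W (xor u₁ u₂) y₁ *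
            Real.logb 2 (W (xor u₁ u₂) y₁ / ((W false y₁ + W true y₁)/2)) := by
          refine Finset.sum_congr rfl fun u₁ _ => Finset.sum_congr rfl fun u₂ _ =>
            Finset.sum_congr rfl fun y₁ _ => h1 u₁ u₂ y₁
      _ = ∑ u₂ : Bool, ∑ u₁ : Bool, ∑ y₁ : Y, 1/4 * W (xor u₁ u₂) y₁ *
            Real.logb 2 (W (xor u₁ u₂) y₁ / ((W false y₁ + W true y₁)/2)) := Finset.sum_comm
      _ = ∑ u₂ : Bool, ∑ x : Bool, ∑ y₁ : Y, 1/4 * W x y₁ *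
            Real.logb 2 (W x y₁ / ((W false y₁ + W true y₁)/2)) := by
          refine Finset.sum_congr rfl fun u₂ _ => ?_
          exact sum_xor_bool (fun x => ∑ y₁ : Y, 1/4 * W x y₁ *
            Real.logb 2 (W x y₁ / ((W false y₁ + W true y₁)/2))) u₂
      _ = mutualInfo W := by
          rw [Fintype.sum_bool, mutualInfo, ← Finset.sum_add_distrib]
          refine Finset.sum_congr rfl fun x _ => ?_
          rw [← Finset.sum_add_distrib]
          exact Finset.sum_congr rfl fun y _ => by ring
  have hS2 : (∑ u₁ : Bool, ∑ u₂ : Bool, ∑ y₁ : Y, ∑ y₂ : Y,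
      1/4*(W (xor u₁ u₂) y₁ * W u₂ y₂) *
        Real.logb 2 (W u₂ y₂ / ((W false y₂ + W true y₂)/2)))
      = mutualInfo W := by
    have h1 : ∀ (u₁ u₂ : Bool) (y₂ : Y),
        (∑ y₁ : Y, 1/4*(W (xor u₁ u₂) y₁ * W u₂ y₂) *
          Real.logb 2 (W u₂ y₂ / ((W false y₂ + W true y₂)/2)))
        = 1/4 * W u₂ y₂ * Real.logb 2 (W u₂ y₂ / ((W false y₂ + W true y₂)/2)) := by
      intro u₁ u₂ y₂
      calc (∑ y₁ : Y, 1/4*(W (xor u₁ u₂) y₁ * W u₂ y₂) *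
              Real.logb 2 (W u₂ y₂ / ((W false y₂ + W true y₂)/2)))
          = ∑ y₁ : Y, (1/4 * W u₂ y₂ *
              Real.logb 2 (W u₂ y₂ / ((W false y₂ + W true y₂)/2))) * W (xor u₁ u₂) y₁ :=
            Finset.sum_congr rfl fun _ _ => by ring
        _ = (1/4 * W u₂ y₂ *
              Real.logb 2 (W u₂ y₂ / ((W false y₂ + W true y₂)/2))) *
              ∑ y₁ : Y, W (xor u₁ u₂) y₁ := by rw [Finset.mul_sum]
        _ = _ := by rw [hWs (xor u₁ u₂), mul_one]
    calc (∑ u₁ : Bool, ∑ u₂ : Bool, ∑ y₁ : Y, ∑ y₂ : Y,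
        1/4*(W (xor u₁ u₂) y₁ * W u₂ y₂) *
          Real.logb 2 (W u₂ y₂ / ((W false y₂ + W true y₂)/2)))
        = ∑ u₁ : Bool, ∑ u₂ : Bool, ∑ y₂ : Y, ∑ y₁ : Y,
            1/4*(W (xor u₁ u₂) y₁ * W u₂ y₂) *
              Real.logb 2 (W u₂ y₂ / ((W false y₂ + W true y₂)/2)) := by
          refine Finset.sum_congr rfl fun u₁ _ => Finset.sum_congr rfl fun u₂ _ =>
            Finset.sum_comm
      _ = ∑ u₁ : Bool, ∑ u₂ : Bool, ∑ y₂ : Y,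
            1/4 * W u₂ y₂ * Real.logb 2 (W u₂ y₂ / ((W false y₂ + W true y₂)/2)) := by
          refine Finset.sum_congr rfl fun u₁ _ => Finset.sum_congr rfl fun u₂ _ =>
            Finset.sum_congr rfl fun y₂ _ => h1 u₁ u₂ y₂
      _ = mutualInfo W := by
          rw [Fintype.sum_bool, mutualInfo, ← Finset.sum_add_distrib]
          refine Finset.sum_congr rfl fun x _ => ?_
          rw [← Finset.sum_add_distrib]
          exact Finset.sum_congr rfl fun y _ => by ring
  rw [step, hS1, hS2]; ring
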